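/- Assume the TBT matrix T is invertible. Then for all complex λ1, λ2 ≠ i/2 and μ1, μ2 ≠ −i/2: ρ(ψ(λ1), ψ(λ2), conj(ψ(conj(μ1))), conj(ψ(conj(μ2)))) = (i/2 + μ2)(i/2 + μ1)(i/2 − λ2)(i/2 − λ1)·ω(λ, μ). -/

import Mathlib

open Matrix

noncomputable section

/-- The scalar sequence `a_r`: `0` for `r < 0`, `i/2` for `r = 0`, `i` for `r > 0`. -/
def aC (r : ℤ) : ℂ := if r < 0 then 0 else if r = 0 then Complex.I / 2 else Complex.I

/-- `A_1`: block matrix `{𝒜_{1,p−q}}` with blocks `0`, `(i/2)I_m`, `i·I_m`. -/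
def A1 (m n : ℕ) : Matrix (Fin n × Fin m) (Fin n × Fin m) ℂ :=
  Matrix.of fun r c => if r.2 = c.2 then aC (((r.1 : ℕ) : ℤ) - ((c.1 : ℕ) : ℤ)) else 0

/-- `A_2 = diag{𝒜_{2,0}, …, 𝒜_{2,0}}`. -/
def A2 (m n : ℕ) : Matrix (Fin n × Fin m) (Fin n × Fin m) ℂ :=
  Matrix.of fun r c => if r.1 = c.1 then aC (((r.2 : ℕ) : ℤ) - ((c.2 : ℕ) : ℤ)) else 0

/-- `𝒜_1 = {a_{j−ℓ}}_{j,ℓ=1}^n`. -/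
def calA1 (n : ℕ) : Matrix (Fin n) (Fin n) ℂ :=
  Matrix.of fun p q => aC (((p : ℕ) : ℤ) - ((q : ℕ) : ℤ))

/-- `𝒜_2 = {a_{j−ℓ}}_{j,ℓ=1}^m`. -/
def calA2 (m : ℕ) : Matrix (Fin m) (Fin m) ℂ :=
  Matrix.of fun j l => aC (((j : ℕ) : ℤ) - ((l : ℕ) : ℤ))

/-- The Toeplitz-block Toeplitz matrix `T`, entry `t_{p−q}^{(j−ℓ)}`. -/
def TBT (m n : ℕ) (t : ℤ → ℤ → ℂ) : Matrix (Fin n × Fin m) (Fin n × Fin m) ℂ :=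
  Matrix.of fun r c =>
    t (((r.1 : ℕ) : ℤ) - ((c.1 : ℕ) : ℤ)) (((r.2 : ℕ) : ℤ) - ((c.2 : ℕ) : ℤ))

/-- `M_{11}`: block column, `p`-th block `(1/2)𝒯_0 + Σ_{s=1}^{p−1} 𝒯_s`. -/
def M11 (m n : ℕ) (t : ℤ → ℤ → ℂ) : Matrix (Fin n × Fin m) (Fin m) ℂ :=
  Matrix.of fun r l => (1 / 2 : ℂ) * t 0 (((r.2 : ℕ) : ℤ) - ((l : ℕ) : ℤ))
    + ∑ s ∈ Finset.range (r.1 : ℕ), t ((s : ℤ) + 1) (((r.2 : ℕ) : ℤ) - ((l : ℕ) : ℤ))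

/-- `M_{21} = [I_m I_m … I_m]`. -/
def M21 (m n : ℕ) : Matrix (Fin m) (Fin n × Fin m) ℂ :=
  Matrix.of fun j c => if j = c.2 then 1 else 0

/-- `M_{31} = M_{21}^*`. -/
def M31 (m n : ℕ) : Matrix (Fin n × Fin m) (Fin m) ℂ := (M21 m n)ᴴ

/-- `M_{41}`: block row, `q`-th block `(1/2)𝒯_0 + Σ_{s=1}^{q−1} 𝒯_{−s}`. -/
def M41 (m n : ℕ) (t : ℤ → ℤ → ℂ) : Matrix (Fin m) (Fin n × Fin m) ℂ :=
  Matrix.of fun j c => (1 / 2 : ℂ) * t 0 (((j : ℕ) : ℤ) - ((c.2 : ℕ) : ℤ))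
    + ∑ s ∈ Finset.range (c.1 : ℕ), t (-((s : ℤ) + 1)) (((j : ℕ) : ℤ) - ((c.2 : ℕ) : ℤ))

/-- `j`-th entry of the column `ℳ_{12}^{(r)}`. -/
def m12e (m : ℕ) (t : ℤ → ℤ → ℂ) (r : ℤ) (j : Fin m) : ℂ :=
  (1 / 2 : ℂ) * t r 0 + ∑ s ∈ Finset.range (j : ℕ), t r ((s : ℤ) + 1)

/-- `ℓ`-th entry of the row `ℳ_{42}^{(r)}`. -/
def m42e (m : ℕ) (t : ℤ → ℤ → ℂ) (r : ℤ) (l : Fin m) : ℂ :=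
  (1 / 2 : ℂ) * t r 0 + ∑ s ∈ Finset.range (l : ℕ), t r (-((s : ℤ) + 1))

/-- `M_{12} = {ℳ_{12}^{(p−q)}}`. -/
def M12 (m n : ℕ) (t : ℤ → ℤ → ℂ) : Matrix (Fin n × Fin m) (Fin n) ℂ :=
  Matrix.of fun r q => m12e m t (((r.1 : ℕ) : ℤ) - ((q : ℕ) : ℤ)) r.2

/-- `M_{22}`. -/
def M22 (m n : ℕ) : Matrix (Fin n) (Fin n × Fin m) ℂ :=
  Matrix.of fun p c => if p = c.1 then 1 else 0

/-- `M_{32} = M_{22}^*`. -/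
def M32 (m n : ℕ) : Matrix (Fin n × Fin m) (Fin n) ℂ := (M22 m n)ᴴ

/-- `M_{42} = {ℳ_{42}^{(p−q)}}`. -/
def M42 (m n : ℕ) (t : ℤ → ℤ → ℂ) : Matrix (Fin n) (Fin n × Fin m) ℂ :=
  Matrix.of fun p c => m42e m t (((p : ℕ) : ℤ) - ((c.1 : ℕ) : ℤ)) c.2

/-- `K`: the `1×mn` row, `q`-th block `(1/2)ℳ_{42}^{(0)} + Σ_{s=1}^{q−1} ℳ_{42}^{(−s)}`. -/
def Krow (m n : ℕ) (t : ℤ → ℤ → ℂ) : (Fin n × Fin m) → ℂ :=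
  fun c => (1 / 2 : ℂ) * m42e m t 0 c.2
    + ∑ s ∈ Finset.range (c.1 : ℕ), m42e m t (-((s : ℤ) + 1)) c.2

/-- `K_{11}`: `p`-th row `(1/2)ℳ_{42}^{(0)} + Σ_{s=1}^{p−1} ℳ_{42}^{(s)}`. -/
def K11 (m n : ℕ) (t : ℤ → ℤ → ℂ) : Matrix (Fin n) (Fin m) ℂ :=
  Matrix.of fun p l => (1 / 2 : ℂ) * m42e m t 0 l
    + ∑ s ∈ Finset.range (p : ℕ), m42e m t ((s : ℤ) + 1) l

/-- `K_{12}`: `q`-th column `(1/2)ℳ_{12}^{(0)} + Σ_{s=1}^{q−1} ℳ_{12}^{(−s)}`. -/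
def K12 (m n : ℕ) (t : ℤ → ℤ → ℂ) : Matrix (Fin m) (Fin n) ℂ :=
  Matrix.of fun j q => (1 / 2 : ℂ) * m12e m t 0 j
    + ∑ s ∈ Finset.range (q : ℕ), m12e m t (-((s : ℤ) + 1)) j

/-- `Π_1 = [M_{11} M_{31}]`. -/
def Pi1 (m n : ℕ) (t : ℤ → ℤ → ℂ) : Matrix (Fin n × Fin m) (Fin m ⊕ Fin m) ℂ :=
  fromCols (M11 m n t) (M31 m n)

/-- `Π_2 = [M_{12} M_{32}]`. -/
def Pi2 (m n : ℕ) (t : ℤ → ℤ → ℂ) : Matrix (Fin n × Fin m) (Fin n ⊕ Fin n) ℂ :=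
  fromCols (M12 m n t) (M32 m n)

/-- `Π̂_1 = col[M_{21}; M_{41}]`. -/
def PiHat1 (m n : ℕ) (t : ℤ → ℤ → ℂ) : Matrix (Fin m ⊕ Fin m) (Fin n × Fin m) ℂ :=
  fromRows (M21 m n) (M41 m n t)

/-- `Π̂_2 = col[M_{22}; M_{42}]`. -/
def PiHat2 (m n : ℕ) (t : ℤ → ℤ → ℂ) : Matrix (Fin n ⊕ Fin n) (Fin n × Fin m) ℂ :=
  fromRows (M22 m n) (M42 m n t)

/-- All-ones vector. -/
def onesV (k : Type*) : k → ℂ := fun _ => 1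

/-- `g_{12} = i·Π̂_1 T^{-1} Π_2 − i·[[𝟏_m 𝟏_n^*, 0],[K_{12}, 0]]`. -/
def g12M (m n : ℕ) (t : ℤ → ℤ → ℂ) : Matrix (Fin m ⊕ Fin m) (Fin n ⊕ Fin n) ℂ :=
  Complex.I • (PiHat1 m n t * (TBT m n t)⁻¹ * Pi2 m n t)
    - Complex.I • fromBlocks (vecMulVec (onesV (Fin m)) (onesV (Fin n))) 0 (K12 m n t) 0

/-- `g_{21} = i·Π̂_2 T^{-1} Π_1 − i·[[𝟏_n 𝟏_m^*, 0],[K_{11}, 0]]`. -/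
def g21M (m n : ℕ) (t : ℤ → ℤ → ℂ) : Matrix (Fin n ⊕ Fin n) (Fin m ⊕ Fin m) ℂ :=
  Complex.I • (PiHat2 m n t * (TBT m n t)⁻¹ * Pi1 m n t)
    - Complex.I • fromBlocks (vecMulVec (onesV (Fin n)) (onesV (Fin m))) 0 (K11 m n t) 0

/-- The `k×k` flip (anti-diagonal) matrix. -/
def flipU (k : ℕ) : Matrix (Fin k) (Fin k) ℂ :=
  Matrix.of fun p q => if (p : ℕ) + (q : ℕ) + 1 = k then 1 else 0

/-- `U_{2k}`, the `2k×2k` flip matrix on the sum type. -/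
def U2 (k : ℕ) : Matrix (Fin k ⊕ Fin k) (Fin k ⊕ Fin k) ℂ :=
  fromBlocks 0 (flipU k) (flipU k) 0

/-- `J_{2k} = diag{I_k, −I_k}`. -/
def J2 (k : ℕ) : Matrix (Fin k ⊕ Fin k) (Fin k ⊕ Fin k) ℂ :=
  fromBlocks 1 0 0 (-1)

/-- `U = U_{mn}`, the `mn×mn` flip matrix (global index `m·p + j`). -/
def UmnM (m n : ℕ) : Matrix (Fin n × Fin m) (Fin n × Fin m) ℂ :=
  Matrix.of fun r c =>
    if m * (r.1 : ℕ) + (r.2 : ℕ) + (m * (c.1 : ℕ) + (c.2 : ℕ)) + 1 = m * n then 1 else 0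

/-- `ψ(λ) = (λ + i/2)/(λ − i/2)`. -/
def psiM (l : ℂ) : ℂ := (l + Complex.I / 2) / (l - Complex.I / 2)

/-- `h(y_1, y_2)`, entry `y_1^{p−1} y_2^{j−1}`. -/
def hVec (m n : ℕ) (y1 y2 : ℂ) : (Fin n × Fin m) → ℂ :=
  fun r => y1 ^ (r.1 : ℕ) * y2 ^ (r.2 : ℕ)

/-- `ω(λ,μ) = 𝟏^*(A_1^*−μ_1)^{-1}(A_2^*−μ_2)^{-1}T^{-1}(A_2−λ_2)^{-1}(A_1−λ_1)^{-1}𝟏`. -/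
def omegaF (m n : ℕ) (t : ℤ → ℤ → ℂ) (l1 l2 u1 u2 : ℂ) : ℂ :=
  star (onesV (Fin n × Fin m)) ⬝ᵥ
    ((((A1 m n)ᴴ - u1 • 1)⁻¹ * ((A2 m n)ᴴ - u2 • 1)⁻¹ * (TBT m n t)⁻¹ *
      (A2 m n - l2 • 1)⁻¹ * (A1 m n - l1 • 1)⁻¹) *ᵥ onesV (Fin n × Fin m))

/-- `ρ(y,z) = h(conj z_1, conj z_2)^* T^{-1} h(y_1,y_2)`. -/
def rhoF (m n : ℕ) (t : ℤ → ℤ → ℂ) (y1 y2 z1 z2 : ℂ) : ℂ :=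
  star (hVec m n ((starRingEnd ℂ) z1) ((starRingEnd ℂ) z2)) ⬝ᵥ
    ((TBT m n t)⁻¹ *ᵥ hVec m n y1 y2)

/-- `Γ_1 = T^{-1}Π_1`. -/
def Gam1 (m n : ℕ) (t : ℤ → ℤ → ℂ) : Matrix (Fin n × Fin m) (Fin m ⊕ Fin m) ℂ :=
  (TBT m n t)⁻¹ * Pi1 m n t

/-- `Γ_2 = T^{-1}Π_2`. -/
def Gam2 (m n : ℕ) (t : ℤ → ℤ → ℂ) : Matrix (Fin n × Fin m) (Fin n ⊕ Fin n) ℂ :=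
  (TBT m n t)⁻¹ * Pi2 m n t

/-- `Γ̂_1 = Π̂_1 T^{-1}`. -/
def GamHat1 (m n : ℕ) (t : ℤ → ℤ → ℂ) : Matrix (Fin m ⊕ Fin m) (Fin n × Fin m) ℂ :=
  PiHat1 m n t * (TBT m n t)⁻¹

/-- `Γ̂_2 = Π̂_2 T^{-1}`. -/
def GamHat2 (m n : ℕ) (t : ℤ → ℤ → ℂ) : Matrix (Fin n ⊕ Fin n) (Fin n × Fin m) ℂ :=
  PiHat2 m n t * (TBT m n t)⁻¹

/-- `Γ = [Γ_1 Γ_2]`. -/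
def GammaFull (m n : ℕ) (t : ℤ → ℤ → ℂ) :
    Matrix (Fin n × Fin m) ((Fin m ⊕ Fin m) ⊕ (Fin n ⊕ Fin n)) ℂ :=
  fromCols (Gam1 m n t) (Gam2 m n t)

/-- `Γ̂ = col[Γ̂_1; Γ̂_2]`. -/
def GammaHatFull (m n : ℕ) (t : ℤ → ℤ → ℂ) :
    Matrix ((Fin m ⊕ Fin m) ⊕ (Fin n ⊕ Fin n)) (Fin n × Fin m) ℂ :=
  fromRows (GamHat1 m n t) (GamHat2 m n t)

/-- The row vector `u(μ)`. -/
def uRow (m n : ℕ) (t : ℤ → ℤ → ℂ) (u1 u2 : ℂ) :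
    ((Fin m ⊕ Fin m) ⊕ (Fin n ⊕ Fin n)) → ℂ :=
  star (onesV (Fin n × Fin m)) ᵥ*
      (((A1 m n)ᴴ - u1 • 1)⁻¹ * ((A2 m n)ᴴ - u2 • 1)⁻¹ * GammaFull m n t)
    - Complex.I • Sum.elim
        (Sum.elim (star (onesV (Fin m)) ᵥ* ((calA2 m)ᴴ - u2 • 1)⁻¹) (0 : Fin m → ℂ))
        (Sum.elim (star (onesV (Fin n)) ᵥ* ((calA1 n)ᴴ - u1 • 1)⁻¹) (0 : Fin n → ℂ))

/-- The column vector `û(λ)`. -/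
def uHatCol (m n : ℕ) (t : ℤ → ℤ → ℂ) (l1 l2 : ℂ) :
    ((Fin m ⊕ Fin m) ⊕ (Fin n ⊕ Fin n)) → ℂ :=
  (GammaHatFull m n t * (A2 m n - l2 • 1)⁻¹ * (A1 m n - l1 • 1)⁻¹) *ᵥ onesV (Fin n × Fin m)
    + Complex.I • Sum.elim
        (Sum.elim (0 : Fin m → ℂ) ((calA2 m - l2 • 1)⁻¹ *ᵥ onesV (Fin m)))
        (Sum.elim (0 : Fin n → ℂ) ((calA1 n - l1 • 1)⁻¹ *ᵥ onesV (Fin n)))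

/-- `P_1 = diag{I_{2m}, 0}`. -/
def P1M (m n : ℕ) :
    Matrix ((Fin m ⊕ Fin m) ⊕ (Fin n ⊕ Fin n)) ((Fin m ⊕ Fin m) ⊕ (Fin n ⊕ Fin n)) ℂ :=
  fromBlocks 1 0 0 0

/-- `P_2 = I − P_1`. -/
def P2M (m n : ℕ) :
    Matrix ((Fin m ⊕ Fin m) ⊕ (Fin n ⊕ Fin n)) ((Fin m ⊕ Fin m) ⊕ (Fin n ⊕ Fin n)) ℂ :=
  1 - P1M m n

/-- `G(λ)`, built from `g_{12}` and `g_{21}`. -/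
def GMat (m n : ℕ) (g12 : Matrix (Fin m ⊕ Fin m) (Fin n ⊕ Fin n) ℂ)
    (g21 : Matrix (Fin n ⊕ Fin n) (Fin m ⊕ Fin m) ℂ) (l1 l2 : ℂ) :
    Matrix ((Fin m ⊕ Fin m) ⊕ (Fin n ⊕ Fin n)) ((Fin m ⊕ Fin m) ⊕ (Fin n ⊕ Fin n)) ℂ :=
  fromBlocks (fromBlocks (calA2 m - l2 • 1) 0 0 (calA2 m - l2 • 1)) g12
             g21 (fromBlocks (calA1 n - l1 • 1) 0 0 (calA1 n - l1 • 1))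

/-- `G` as a matrix over the polynomial ring `ℂ[λ_1, λ_2]` (variables `X 0 = λ_1`, `X 1 = λ_2`). -/
def GPoly (m n : ℕ) (g12 : Matrix (Fin m ⊕ Fin m) (Fin n ⊕ Fin n) ℂ)
    (g21 : Matrix (Fin n ⊕ Fin n) (Fin m ⊕ Fin m) ℂ) :
    Matrix ((Fin m ⊕ Fin m) ⊕ (Fin n ⊕ Fin n)) ((Fin m ⊕ Fin m) ⊕ (Fin n ⊕ Fin n))
      (MvPolynomial (Fin 2) ℂ) :=
  fromBlocks
    (fromBlocks ((calA2 m).map MvPolynomial.C - (MvPolynomial.X 1 : MvPolynomial (Fin 2) ℂ) • 1) 0 0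
      ((calA2 m).map MvPolynomial.C - (MvPolynomial.X 1 : MvPolynomial (Fin 2) ℂ) • 1))
    (g12.map MvPolynomial.C)
    (g21.map MvPolynomial.C)
    (fromBlocks ((calA1 n).map MvPolynomial.C - (MvPolynomial.X 0 : MvPolynomial (Fin 2) ℂ) • 1) 0 0
      ((calA1 n).map MvPolynomial.C - (MvPolynomial.X 0 : MvPolynomial (Fin 2) ℂ) • 1))

/-- The vector `col[0_m; 𝟏_m; 0_n; 𝟏_n]`. -/
def eVec (m n : ℕ) : ((Fin m ⊕ Fin m) ⊕ (Fin n ⊕ Fin n)) → ℂ :=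
  Sum.elim (Sum.elim (0 : Fin m → ℂ) (onesV (Fin m))) (Sum.elim (0 : Fin n → ℂ) (onesV (Fin n)))

/-- `diag{J_{2m}U_{2m}, J_{2n}U_{2n}}`. -/
def DJU (m n : ℕ) :
    Matrix ((Fin m ⊕ Fin m) ⊕ (Fin n ⊕ Fin n)) ((Fin m ⊕ Fin m) ⊕ (Fin n ⊕ Fin n)) ℂ :=
  fromBlocks (J2 m * U2 m) 0 0 (J2 n * U2 n)

/-- The block column `col[I_m; I_m; …; I_m]`. -/
def EcolId (m n : ℕ) : Matrix (Fin n × Fin m) (Fin m) ℂ :=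
  Matrix.of fun r l => if r.2 = l then 1 else 0

lemma isUnit_of_lowTri {ι : Type*} [Fintype ι] [DecidableEq ι] (M : Matrix ι ι ℂ)
    (w : ι → ℕ) (hw : Function.Injective w)
    (h0 : ∀ i j, w i < w j → M i j = 0) (hd : ∀ i, M i i ≠ 0) : IsUnit M := by
  rw [Matrix.isUnit_iff_isUnit_det, ← Matrix.det_transpose]
  have hbt : Mᵀ.BlockTriangular w := fun i j h => h0 j i h
  rw [hbt.det, isUnit_iff_ne_zero, Finset.prod_ne_zero_iff]
  intro a ha
  obtain ⟨i, -, rfl⟩ := Finset.mem_image.mp ha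
  haveI : Subsingleton {j // w j = w i} := ⟨fun x y => Subtype.ext (hw (x.2.trans y.2.symm))⟩
  rw [Matrix.det_eq_elem_of_subsingleton _ ⟨i, rfl⟩]
  simpa [Matrix.toSquareBlock, Matrix.toSquareBlockProp] using hd i

lemma sumA (k : ℕ) (x : ℂ) (p : Fin k) :
    ∑ q : Fin k, aC ((p : ℤ) - (q : ℤ)) * x ^ (q : ℕ)
      = Complex.I / 2 * x ^ (p : ℕ) + Complex.I * ∑ s ∈ Finset.range (p : ℕ), x ^ s := by
  have hk : (p : ℕ) + 1 ≤ k := p.2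
  rw [show (∑ q : Fin k, aC ((p : ℤ) - (q : ℤ)) * x ^ (q : ℕ))
      = ∑ q ∈ Finset.range k, aC ((p : ℤ) - (q : ℤ)) * x ^ q from
    Fin.sum_univ_eq_sum_range (fun q => aC ((p : ℤ) - (q : ℤ)) * x ^ q) k]
  rw [Finset.range_eq_Ico, ← Finset.sum_Ico_consecutive _ (Nat.zero_le ((p : ℕ) + 1)) hk]
  have h2 : ∑ q ∈ Finset.Ico ((p : ℕ) + 1) k, aC ((p : ℤ) - (q : ℤ)) * x ^ q = 0 := by
    apply Finset.sum_eq_zero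
    intro q hq
    have : ((p : ℤ) - (q : ℤ)) < 0 := by
      have := (Finset.mem_Ico.mp hq).1; omega
    simp [aC, this]
  rw [h2, add_zero, ← Finset.range_eq_Ico]
  rw [Finset.sum_range_succ]
  have h3 : ∀ q ∈ Finset.range (p : ℕ), aC ((p : ℤ) - (q : ℤ)) * x ^ q = Complex.I * x ^ q := by
    intro q hq
    have hq' := Finset.mem_range.mp hq
    have h1 : ¬ ((p : ℤ) - (q : ℤ) < 0) := by omega
    have h2 : ((p : ℤ) - (q : ℤ)) ≠ 0 := by omega
    simp [aC, h1, h2]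
  rw [Finset.sum_congr rfl h3, ← Finset.mul_sum]
  simp [aC]
  ring

lemma core (k : ℕ) (l : ℂ) (hl : l ≠ Complex.I / 2) (p : Fin k) :
    (∑ q : Fin k, aC ((p : ℤ) - (q : ℤ)) * psiM l ^ (q : ℕ)) - l * psiM l ^ (p : ℕ)
      = Complex.I / 2 - l := by
  have hd : l - Complex.I / 2 ≠ 0 := sub_ne_zero.mpr hl
  have hI : (Complex.I : ℂ) ≠ 0 := Complex.I_ne_zero
  have hd2 : l * 2 - Complex.I ≠ 0 := by
    intro h; apply hd; linear_combination h / 2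
  have hx1 : psiM l - 1 = Complex.I / (l - Complex.I / 2) := by
    unfold psiM; rw [div_sub_one hd, div_eq_div_iff hd hd]; ring
  have hxne : psiM l ≠ 1 := by
    intro h
    rw [h, sub_self] at hx1
    exact hI ((div_eq_zero_iff.mp hx1.symm).resolve_right hd)
  have hinv : Complex.I / (psiM l - 1) = l - Complex.I / 2 := by
    rw [hx1, div_div_cancel₀]
    exact hI
  have key : Complex.I * ((psiM l ^ (p : ℕ) - 1) / (psiM l - 1))
      = (psiM l ^ (p : ℕ) - 1) * (Complex.I / (psiM l - 1)) := by ring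
  rw [sumA, geom_sum_eq hxne, key, hinv]
  ring

lemma A1_mulVec (m n : ℕ) (l : ℂ) (hl : l ≠ Complex.I / 2) :
    (A1 m n - l • 1) *ᵥ (fun r : Fin n × Fin m => psiM l ^ (r.1 : ℕ))
      = fun _ => Complex.I / 2 - l := by
  funext r
  rw [Matrix.sub_mulVec, Matrix.smul_mulVec, Matrix.one_mulVec]
  have h1 : (A1 m n *ᵥ fun r : Fin n × Fin m => psiM l ^ (r.1 : ℕ)) r
      = ∑ q : Fin n, aC ((r.1 : ℤ) - (q : ℤ)) * psiM l ^ (q : ℕ) := by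
    simp [Matrix.mulVec, dotProduct, A1, Fintype.sum_prod_type, ite_mul, zero_mul,
      Finset.sum_ite_eq]
  simp only [Pi.sub_apply, Pi.smul_apply, smul_eq_mul, h1]
  exact core n l hl r.1

lemma A2_mulVec (m n : ℕ) (l1 l2 : ℂ) (hl2 : l2 ≠ Complex.I / 2) :
    (A2 m n - l2 • 1) *ᵥ hVec m n (psiM l1) (psiM l2)
      = fun r : Fin n × Fin m => (Complex.I / 2 - l2) * psiM l1 ^ (r.1 : ℕ) := by
  funext r
  rw [Matrix.sub_mulVec, Matrix.smul_mulVec, Matrix.one_mulVec]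
  have h1 : (A2 m n *ᵥ hVec m n (psiM l1) (psiM l2)) r
      = psiM l1 ^ (r.1 : ℕ) * ∑ j : Fin m, aC ((r.2 : ℤ) - (j : ℤ)) * psiM l2 ^ (j : ℕ) := by
    simp [Matrix.mulVec, dotProduct, A2, hVec, Fintype.sum_prod_type, ite_mul, zero_mul,
      Finset.sum_ite_eq, Finset.mul_sum]
    exact Finset.sum_congr rfl fun x _ => by ring
  simp only [Pi.sub_apply, Pi.smul_apply, smul_eq_mul, h1, hVec]
  have := core m l2 hl2 r.2
  linear_combination psiM l1 ^ (r.1 : ℕ) * this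

lemma wInj (m n : ℕ) : Function.Injective (fun r : Fin n × Fin m => m * (r.1 : ℕ) + (r.2 : ℕ)) := by
  intro a b hab
  have hab : m * (a.1 : ℕ) + (a.2 : ℕ) = m * (b.1 : ℕ) + (b.2 : ℕ) := by
    simpa using hab
  have ha2 := a.2.2
  have hb2 := b.2.2
  have h1 : (a.1 : ℕ) = (b.1 : ℕ) := by
    rcases Nat.lt_trichotomy (a.1 : ℕ) (b.1 : ℕ) with h | h | h
    · exfalso
      have h2 : m * ((a.1 : ℕ) + 1) ≤ m * (b.1 : ℕ) := Nat.mul_le_mul_left m h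
      have h3 : m * ((a.1 : ℕ) + 1) = m * (a.1 : ℕ) + m := by ring
      omega
    · exact h
    · exfalso
      have h2 : m * ((b.1 : ℕ) + 1) ≤ m * (a.1 : ℕ) := Nat.mul_le_mul_left m h
      have h3 : m * ((b.1 : ℕ) + 1) = m * (b.1 : ℕ) + m := by ring
      omega
  rw [h1] at hab
  have h2 : (a.2 : ℕ) = (b.2 : ℕ) := by omega
  exact Prod.ext (Fin.ext h1) (Fin.ext h2)

lemma isUnit_A1_sub (m n : ℕ) (l : ℂ) (hl : l ≠ Complex.I / 2) :
    IsUnit (A1 m n - l • 1) := by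
  apply isUnit_of_lowTri _ (fun r : Fin n × Fin m => m * (r.1 : ℕ) + (r.2 : ℕ)) (wInj m n)
  · intro i j hij
    have hij : m * (i.1 : ℕ) + (i.2 : ℕ) < m * (j.1 : ℕ) + (j.2 : ℕ) := hij
    have hne : i ≠ j := by intro h; subst h; omega
    simp only [Matrix.sub_apply, A1, Matrix.of_apply, Matrix.smul_apply,
      Matrix.one_apply_ne hne, smul_zero, sub_zero]
    by_cases h2 : i.2 = j.2
    · have : (i.1 : ℕ) < (j.1 : ℕ) := by
        have : (i.2 : ℕ) = (j.2 : ℕ) := by rw [h2]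
        by_contra hc
        have : m * (j.1 : ℕ) ≤ m * (i.1 : ℕ) := Nat.mul_le_mul_left m (by omega)
        omega
      have : ((i.1 : ℕ) : ℤ) - ((j.1 : ℕ) : ℤ) < 0 := by omega
      simp [h2, aC, this]
    · simp [h2]
  · intro i
    have : (Complex.I : ℂ) / 2 - l ≠ 0 := sub_ne_zero.mpr (Ne.symm hl)
    simpa [Matrix.sub_apply, A1, Matrix.one_apply, aC] using this

lemma isUnit_A2_sub (m n : ℕ) (l : ℂ) (hl : l ≠ Complex.I / 2) :
    IsUnit (A2 m n - l • 1) := by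
  apply isUnit_of_lowTri _ (fun r : Fin n × Fin m => m * (r.1 : ℕ) + (r.2 : ℕ)) (wInj m n)
  · intro i j hij
    have hij : m * (i.1 : ℕ) + (i.2 : ℕ) < m * (j.1 : ℕ) + (j.2 : ℕ) := hij
    have hne : i ≠ j := by intro h; subst h; omega
    simp only [Matrix.sub_apply, A2, Matrix.of_apply, Matrix.smul_apply,
      Matrix.one_apply_ne hne, smul_zero, sub_zero]
    by_cases h1 : i.1 = j.1
    · have : (i.2 : ℕ) < (j.2 : ℕ) := by
        have h3 : (i.1 : ℕ) = (j.1 : ℕ) := by rw [h1]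
        rw [h3] at hij
        omega
      have : ((i.2 : ℕ) : ℤ) - ((j.2 : ℕ) : ℤ) < 0 := by omega
      simp [h1, aC, this]
    · simp [h1]
  · intro i
    have : (Complex.I : ℂ) / 2 - l ≠ 0 := sub_ne_zero.mpr (Ne.symm hl)
    simpa [Matrix.sub_apply, A2, Matrix.one_apply, aC] using this

lemma inv_mulVec_of {ι : Type*} [Fintype ι] [DecidableEq ι] (B : Matrix ι ι ℂ)
    (hB : IsUnit B) (v w : ι → ℂ) (c : ℂ) (hc : c ≠ 0) (h : B *ᵥ v = c • w) :
    B⁻¹ *ᵥ w = c⁻¹ • v := by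
  have h2 : B⁻¹ *ᵥ (B *ᵥ v) = v := by
    rw [Matrix.mulVec_mulVec, Matrix.nonsing_inv_mul _ ((Matrix.isUnit_iff_isUnit_det _).mp hB),
      Matrix.one_mulVec]
  rw [h, Matrix.mulVec_smul] at h2
  rw [← h2, smul_smul, inv_mul_cancel₀ hc, one_smul]


set_option maxHeartbeats 1000000 in
/-- the relation between `ρ` and `ω`. -/
theorem rho_via_omega (m n : ℕ) (hm : 0 < m) (hn : 0 < n) (t : ℤ → ℤ → ℂ)
    (hT : IsUnit (TBT m n t)) (l1 l2 u1 u2 : ℂ)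
    (hl1 : l1 ≠ Complex.I / 2) (hl2 : l2 ≠ Complex.I / 2)
    (hu1 : u1 ≠ -(Complex.I / 2)) (hu2 : u2 ≠ -(Complex.I / 2)) :
    rhoF m n t (psiM l1) (psiM l2)
        ((starRingEnd ℂ) (psiM ((starRingEnd ℂ) u1)))
        ((starRingEnd ℂ) (psiM ((starRingEnd ℂ) u2)))
      = (Complex.I / 2 + u2) * (Complex.I / 2 + u1) * (Complex.I / 2 - l2) *
          (Complex.I / 2 - l1) * omegaF m n t l1 l2 u1 u2 := by
  set u1' := (starRingEnd ℂ) u1 with hu1'def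
  set u2' := (starRingEnd ℂ) u2 with hu2'def
  have hu1' : u1' ≠ Complex.I / 2 := by
    intro h
    apply hu1
    have h2 : u1 = -Complex.I / 2 := by
      have := congrArg (starRingEnd ℂ) h
      simpa [hu1'def, Complex.conj_I, map_div₀, map_ofNat] using this
    rw [h2]; ring
  have hu2' : u2' ≠ Complex.I / 2 := by
    intro h
    apply hu2
    have h2 : u2 = -Complex.I / 2 := by
      have := congrArg (starRingEnd ℂ) h
      simpa [hu2'def, Complex.conj_I, map_div₀, map_ofNat] using this
    rw [h2]; ring
  have hc1 : Complex.I / 2 - l1 ≠ 0 := sub_ne_zero.mpr (Ne.symm hl1)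
  have hc2 : Complex.I / 2 - l2 ≠ 0 := sub_ne_zero.mpr (Ne.symm hl2)
  have hd1 : Complex.I / 2 - u1' ≠ 0 := sub_ne_zero.mpr (Ne.symm hu1')
  have hd2 : Complex.I / 2 - u2' ≠ 0 := sub_ne_zero.mpr (Ne.symm hu2')
  set v1 : (Fin n × Fin m) → ℂ := fun r => psiM l1 ^ (r.1 : ℕ) with hv1def
  set v1' : (Fin n × Fin m) → ℂ := fun r => psiM u1' ^ (r.1 : ℕ) with hv1'def
  have hB1 := isUnit_A1_sub m n l1 hl1
  have hB2 := isUnit_A2_sub m n l2 hl2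
  have hB1' := isUnit_A1_sub m n u1' hu1'
  have hB2' := isUnit_A2_sub m n u2' hu2'
  have hstep1 : (A1 m n - l1 • 1)⁻¹ *ᵥ onesV (Fin n × Fin m)
      = (Complex.I / 2 - l1)⁻¹ • v1 := by
    refine inv_mulVec_of _ hB1 v1 _ _ hc1 ?_
    rw [A1_mulVec m n l1 hl1]
    funext r
    simp [onesV]
  have hstep2 : (A2 m n - l2 • 1)⁻¹ *ᵥ v1
      = (Complex.I / 2 - l2)⁻¹ • hVec m n (psiM l1) (psiM l2) := by
    refine inv_mulVec_of _ hB2 _ _ _ hc2 ?_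
    rw [A2_mulVec m n l1 l2 hl2]
    funext r
    simp [hv1def]
  have hstep1' : (A1 m n - u1' • 1)⁻¹ *ᵥ onesV (Fin n × Fin m)
      = (Complex.I / 2 - u1')⁻¹ • v1' := by
    refine inv_mulVec_of _ hB1' v1' _ _ hd1 ?_
    rw [A1_mulVec m n u1' hu1']
    funext r
    simp [onesV]
  have hstep2' : (A2 m n - u2' • 1)⁻¹ *ᵥ v1'
      = (Complex.I / 2 - u2')⁻¹ • hVec m n (psiM u1') (psiM u2') := by
    refine inv_mulVec_of _ hB2' _ _ _ hd2 ?_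
    rw [A2_mulVec m n u1' u2' hu2']
    funext r
    simp [hv1'def]
  have eC1 : ((A1 m n)ᴴ - u1 • (1 : Matrix (Fin n × Fin m) (Fin n × Fin m) ℂ))⁻¹
      = ((A1 m n - u1' • 1)⁻¹)ᴴ := by
    rw [Matrix.conjTranspose_nonsing_inv]
    congr 1
    rw [Matrix.conjTranspose_sub, Matrix.conjTranspose_smul, Matrix.conjTranspose_one]
    congr 1
    rw [hu1'def, starRingEnd_apply, star_star]
  have eC2 : ((A2 m n)ᴴ - u2 • (1 : Matrix (Fin n × Fin m) (Fin n × Fin m) ℂ))⁻¹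
      = ((A2 m n - u2' • 1)⁻¹)ᴴ := by
    rw [Matrix.conjTranspose_nonsing_inv]
    congr 1
    rw [Matrix.conjTranspose_sub, Matrix.conjTranspose_smul, Matrix.conjTranspose_one]
    congr 1
    rw [hu2'def, starRingEnd_apply, star_star]
  set S : ℂ := star (hVec m n (psiM u1') (psiM u2')) ⬝ᵥ
      ((TBT m n t)⁻¹ *ᵥ hVec m n (psiM l1) (psiM l2)) with hSdef
  have hRho : rhoF m n t (psiM l1) (psiM l2)
      ((starRingEnd ℂ) (psiM u1')) ((starRingEnd ℂ) (psiM u2')) = S := by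
    rw [rhoF, Complex.conj_conj, Complex.conj_conj]
  have hOmega : omegaF m n t l1 l2 u1 u2
      = (starRingEnd ℂ) ((Complex.I / 2 - u1')⁻¹) * ((starRingEnd ℂ) ((Complex.I / 2 - u2')⁻¹)
          * ((Complex.I / 2 - l1)⁻¹ * ((Complex.I / 2 - l2)⁻¹ * S))) := by
    rw [omegaF, eC1, eC2]
    simp only [← Matrix.mulVec_mulVec]
    rw [hstep1]
    simp only [Matrix.mulVec_smul, dotProduct_smul]
    rw [hstep2]
    simp only [Matrix.mulVec_smul, dotProduct_smul]
    rw [Matrix.dotProduct_mulVec, ← Matrix.star_mulVec, hstep1']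
    rw [star_smul, smul_dotProduct]
    rw [Matrix.dotProduct_mulVec, ← Matrix.star_mulVec, hstep2']
    rw [star_smul, smul_dotProduct]
    simp only [smul_eq_mul, starRingEnd_apply]
    ring
  rw [hRho, hOmega]
  have hcu1 : (starRingEnd ℂ) ((Complex.I / 2 - u1')⁻¹) = -((Complex.I / 2 + u1)⁻¹) := by
    simp only [map_inv₀, map_sub, map_div₀, Complex.conj_I, hu1'def, Complex.conj_conj,
      map_ofNat]
    rw [show -Complex.I / (2 : ℂ) - u1 = -(Complex.I / 2 + u1) by ring, inv_neg]
  have hcu2 : (starRingEnd ℂ) ((Complex.I / 2 - u2')⁻¹) = -((Complex.I / 2 + u2)⁻¹) := by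
    simp only [map_inv₀, map_sub, map_div₀, Complex.conj_I, hu2'def, Complex.conj_conj,
      map_ofNat]
    rw [show -Complex.I / (2 : ℂ) - u2 = -(Complex.I / 2 + u2) by ring, inv_neg]
  rw [hcu1, hcu2]
  have hp : Complex.I / 2 + u1 ≠ 0 := by
    intro h; apply hu1; linear_combination h
  have hq : Complex.I / 2 + u2 ≠ 0 := by
    intro h; apply hu2; linear_combination h
  have key : (Complex.I / 2 + u2) * (Complex.I / 2 + u1) * (Complex.I / 2 - l2) *
      (Complex.I / 2 - l1) *
      (-((Complex.I / 2 + u1)⁻¹) * (-((Complex.I / 2 + u2)⁻¹) *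
        ((Complex.I / 2 - l1)⁻¹ * (Complex.I / 2 - l2)⁻¹))) = 1 := by
    rw [show (Complex.I / 2 + u2) * (Complex.I / 2 + u1) * (Complex.I / 2 - l2) *
        (Complex.I / 2 - l1) *
        (-((Complex.I / 2 + u1)⁻¹) * (-((Complex.I / 2 + u2)⁻¹) *
          ((Complex.I / 2 - l1)⁻¹ * (Complex.I / 2 - l2)⁻¹)))
      = ((Complex.I / 2 + u2) * (Complex.I / 2 + u2)⁻¹) *
        (((Complex.I / 2 + u1) * (Complex.I / 2 + u1)⁻¹) *
        (((Complex.I / 2 - l2) * (Complex.I / 2 - l2)⁻¹) *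
        ((Complex.I / 2 - l1) * (Complex.I / 2 - l1)⁻¹))) from by ring,
      mul_inv_cancel₀ hq, mul_inv_cancel₀ hp, mul_inv_cancel₀ hc2, mul_inv_cancel₀ hc1]
    norm_num
  linear_combination (-S) * key
end
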